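/- Let λ be a positive root and t ∈ B with λ_t = 1 (the coordinate of λ at α_t equals 1). Then λ = ρ(w) α_t for some w belonging to the subgroup of W generated by the distinguished generators {s ∈ B : s ≠ t}. -/

import Mathlib

open Real

variable {B : Type*}

/-- The pairing constant `⟨α_s, α_t⟩` of the standard bilinear form:
`-cos (π / M s t)` if `M s t ≠ 0`, and `-1` if `M s t = 0` (i.e. `m_{s,t} = ∞`). -/
noncomputable def pairing (M : CoxeterMatrix B) (s t : B) : ℝ :=
  if M s t = 0 then -1 else -Real.cos (Real.pi / (M s t : ℝ))

/-- The standard symmetric bilinear form on `V = B → ℝ`. -/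
noncomputable def form [Fintype B] (M : CoxeterMatrix B) (v w : B → ℝ) : ℝ :=
  ∑ s, ∑ t, v s * w t * pairing M s t

/-- The simple root `α_s`, i.e. the standard basis vector at `s`. -/
noncomputable def sroot [DecidableEq B] (s : B) : B → ℝ := Pi.single s 1

/-- `λ` is a root: `λ = ρ(w) α_s` for some `w ∈ W`, `s ∈ B`. -/
def IsRoot [DecidableEq B] (M : CoxeterMatrix B)
    (ρ : M.Group →* Module.End ℝ (B → ℝ)) (lam : B → ℝ) : Prop :=
  ∃ (w : M.Group) (s : B), ρ w (sroot s) = lam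

/-- `λ` is positive: all coordinates are nonnegative. -/
def IsPos (lam : B → ℝ) : Prop := ∀ s, 0 ≤ lam s

/-- `λ` is negative: all coordinates are nonpositive. -/
def IsNeg (lam : B → ℝ) : Prop := ∀ s, lam s ≤ 0

/-- `λ` is a positive root. -/
def IsPosRoot [DecidableEq B] (M : CoxeterMatrix B)
    (ρ : M.Group →* Module.End ℝ (B → ℝ)) (lam : B → ℝ) : Prop :=
  IsRoot M ρ lam ∧ IsPos lam

/-- `λ` dominates `μ`: for every `w ∈ W`, if `ρ(w) μ` is positive then so is `ρ(w) λ`. -/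
def Dominates (M : CoxeterMatrix B)
    (ρ : M.Group →* Module.End ℝ (B → ℝ)) (lam mu : B → ℝ) : Prop :=
  ∀ w : M.Group, IsPos (ρ w mu) → IsPos (ρ w lam)

/-- `λ` is a minimal root: a positive root dominating no positive root other than itself. -/
def IsMinimal [DecidableEq B] (M : CoxeterMatrix B)
    (ρ : M.Group →* Module.End ℝ (B → ℝ)) (lam : B → ℝ) : Prop :=
  IsPosRoot M ρ lam ∧
    ∀ mu, IsPosRoot M ρ mu → Dominates M ρ lam mu → mu = lam

/-- The depth `δ(λ)` of a positive root:
the least Coxeter length of a `w ∈ W` with `ρ(w⁻¹) λ` negative. -/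
noncomputable def depth (M : CoxeterMatrix B)
    (ρ : M.Group →* Module.End ℝ (B → ℝ)) (lam : B → ℝ) : ℕ :=
  sInf {n | ∃ w : M.Group, IsNeg (ρ w⁻¹ lam) ∧ M.toCoxeterSystem.length w = n}

/-- The partial order `λ ⪯ μ` on positive roots:
`μ = ρ(w) λ` for some `w` with `δ(μ) = ℓ(w) + δ(λ)`. -/
def PLE (M : CoxeterMatrix B)
    (ρ : M.Group →* Module.End ℝ (B → ℝ)) (lam mu : B → ℝ) : Prop :=
  ∃ w : M.Group, mu = ρ w lam ∧
    depth M ρ mu = M.toCoxeterSystem.length w + depth M ρ lam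

/-- The Coxeter graph of `M`: distinct `s`, `t` are adjacent iff `M s t ≥ 3` or `M s t = 0`. -/
def coxGraph (M : CoxeterMatrix B) : SimpleGraph B where
  Adj s t := s ≠ t ∧ (M s t = 0 ∨ 3 ≤ M s t)
  symm := by
    constructor; intro s t h
    exact ⟨h.1.symm, by rw [M.symmetric t s]; exact h.2⟩
  loopless := by constructor; intro s h; exact h.1 rfl

/-- The support of a vector `λ ∈ V`. -/
def supp (lam : B → ℝ) : Set B := {s | lam s ≠ 0}

set_option linter.unusedSectionVars false

namespace St15

open CoxeterSystem List

section FormLemmas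

variable [DecidableEq B] [Fintype B] (M : CoxeterMatrix B)

theorem pairing_comm (s t : B) : pairing M s t = pairing M t s := by
  unfold pairing; rw [M.symmetric s t]

theorem pairing_self (s : B) : pairing M s s = 1 := by
  unfold pairing
  rw [M.diagonal s, if_neg one_ne_zero]
  norm_num

theorem form_add_left (v v' w : B → ℝ) : form M (v + v') w = form M v w + form M v' w := by
  simp only [form, Pi.add_apply, ← Finset.sum_add_distrib]
  exact Finset.sum_congr rfl fun s _ => Finset.sum_congr rfl fun t _ => by ring

theorem form_sub_left (v v' w : B → ℝ) : form M (v - v') w = form M v w - form M v' w := by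
  simp only [form, Pi.sub_apply, ← Finset.sum_sub_distrib]
  exact Finset.sum_congr rfl fun s _ => Finset.sum_congr rfl fun t _ => by ring

theorem form_smul_left (a : ℝ) (v w : B → ℝ) : form M (a • v) w = a * form M v w := by
  simp only [form, Pi.smul_apply, smul_eq_mul, Finset.mul_sum]
  exact Finset.sum_congr rfl fun s _ => Finset.sum_congr rfl fun t _ => by ring

theorem form_sub_right (v w w' : B → ℝ) : form M v (w - w') = form M v w - form M v w' := by
  simp only [form, Pi.sub_apply, ← Finset.sum_sub_distrib]
  exact Finset.sum_congr rfl fun s _ => Finset.sum_congr rfl fun t _ => by ring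

theorem form_smul_right (a : ℝ) (v w : B → ℝ) : form M v (a • w) = a * form M v w := by
  simp only [form, Pi.smul_apply, smul_eq_mul, Finset.mul_sum]
  exact Finset.sum_congr rfl fun s _ => Finset.sum_congr rfl fun t _ => by ring

theorem form_symm (v w : B → ℝ) : form M v w = form M w v := by
  rw [form, form, Finset.sum_comm]
  exact Finset.sum_congr rfl fun t _ => Finset.sum_congr rfl fun s _ => by
    rw [pairing_comm M s t]; ring

theorem form_sroot_right (v : B → ℝ) (s : B) :
    form M v (sroot s) = ∑ u, v u * pairing M u s := by
  unfold form sroot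
  refine Finset.sum_congr rfl fun u _ => ?_
  rw [Finset.sum_eq_single s]
  · rw [Pi.single_eq_same]; ring
  · intro b _ hb
    rw [Pi.single_eq_of_ne hb]; ring
  · intro h; exact absurd (Finset.mem_univ s) h

theorem form_sroot_left (v : B → ℝ) (s : B) :
    form M (sroot s) v = ∑ u, v u * pairing M s u := by
  rw [form_symm, form_sroot_right]
  exact Finset.sum_congr rfl fun u _ => by rw [pairing_comm M u s]

theorem form_sroot_sroot (s t : B) : form M (sroot s) (sroot t) = pairing M s t := by
  rw [form_sroot_right]
  unfold sroot
  rw [Finset.sum_eq_single s]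
  · rw [Pi.single_eq_same]; ring
  · intro b _ hb
    rw [Pi.single_eq_of_ne hb]; ring
  · intro h; exact absurd (Finset.mem_univ s) h

theorem form_expand_left (v w : B → ℝ) :
    form M v w = ∑ u, v u * form M (sroot u) w := by
  have h : ∀ u : B, v u * form M (sroot u) w = ∑ t, v u * (w t * pairing M u t) := fun u => by
    rw [form_sroot_left, Finset.mul_sum]
  rw [Finset.sum_congr rfl fun u _ => h u]
  unfold form
  exact Finset.sum_congr rfl fun u _ => Finset.sum_congr rfl fun t _ => by ring

theorem form_combo (a b : ℝ) (x y z : B) :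
    form M (a • sroot x + b • sroot y) (sroot z)
      = a * pairing M x z + b * pairing M y z := by
  rw [form_add_left, form_smul_left, form_smul_left, form_sroot_sroot, form_sroot_sroot]

theorem sroot_pos (s : B) : IsPos (sroot (B := B) s) := by
  intro u
  unfold sroot
  rcases eq_or_ne u s with h | h
  · subst h; rw [Pi.single_eq_same]; norm_num
  · rw [Pi.single_eq_of_ne h]

theorem sroot_ne_zero (s : B) : sroot (B := B) s ≠ 0 := by
  intro h
  have := congrFun h s
  rw [sroot, Pi.single_eq_same] at this
  simp at this

end FormLemmas

end St15

namespace St15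

section RhoLemmas

variable [DecidableEq B] [Fintype B] (M : CoxeterMatrix B)
  (ρ : M.Group →* Module.End ℝ (B → ℝ))

theorem rho_mul (a b : M.Group) (x : B → ℝ) : ρ (a * b) x = ρ a (ρ b x) := by
  rw [map_mul]; rfl

theorem rho_one (x : B → ℝ) : ρ 1 x = x := by
  rw [map_one]; rfl

theorem rho_inv_apply (w : M.Group) (x : B → ℝ) : ρ w⁻¹ (ρ w x) = x := by
  rw [← rho_mul, inv_mul_cancel, rho_one]

theorem rho_apply_inv (w : M.Group) (x : B → ℝ) : ρ w (ρ w⁻¹ x) = x := by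
  rw [← rho_mul, mul_inv_cancel, rho_one]

variable (hρ : ∀ (s : B) (v : B → ℝ),
      ρ (M.simple s) v = v - (2 * form M v (sroot s)) • sroot s)

theorem root_ne_zero {lam : B → ℝ} (h : IsRoot M ρ lam) : lam ≠ 0 := by
  obtain ⟨w, u, rfl⟩ := h
  intro h0
  have h1 : ρ w⁻¹ (ρ w (sroot u)) = sroot u := rho_inv_apply M ρ w _
  rw [h0, map_zero] at h1
  exact sroot_ne_zero u h1.symm

theorem isRoot_rho {lam : B → ℝ} (h : IsRoot M ρ lam) (g : M.Group) :
    IsRoot M ρ (ρ g lam) := by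
  obtain ⟨w, u, rfl⟩ := h
  exact ⟨g * w, u, by rw [rho_mul]⟩

theorem pos_neg_eq_zero {lam : B → ℝ} (hp : IsPos lam) (hn : IsNeg lam) : lam = 0 :=
  funext fun u => le_antisymm (hn u) (hp u)

include hρ

theorem rho_simple_sroot (s : B) : ρ (M.simple s) (sroot s) = -sroot s := by
  rw [hρ, form_sroot_sroot, pairing_self]
  module

theorem rho_simple_apply_ne {u s : B} (h : u ≠ s) (v : B → ℝ) :
    (ρ (M.simple s) v) u = v u := by
  rw [hρ]
  simp [sroot, Pi.single_eq_of_ne h]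

theorem rho_simple_invol (s : B) (v : B → ℝ) :
    ρ (M.simple s) (ρ (M.simple s) v) = v := by
  rw [← rho_mul]
  have h : M.simple s * M.simple s = 1 := M.toCoxeterSystem.simple_mul_simple_self s
  rw [h, rho_one]

theorem form_rho_simple (s : B) (x y : B → ℝ) :
    form M (ρ (M.simple s) x) (ρ (M.simple s) y) = form M x y := by
  rw [hρ, hρ, form_sub_left, form_sub_right, form_sub_right, form_smul_left,
    form_smul_right, form_smul_left, form_smul_right, form_sroot_sroot, pairing_self,
    form_symm M (sroot s) y]
  ring

theorem form_rho (g : M.Group) (x y : B → ℝ) :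
    form M (ρ g x) (ρ g y) = form M x y := by
  revert x y
  refine M.toCoxeterSystem.simple_induction_left
    (p := fun g => ∀ x y : B → ℝ, form M (ρ g x) (ρ g y) = form M x y) g ?_ ?_
  · intro x y; rw [rho_one, rho_one]
  intro w i h x y
  rw [CoxeterMatrix.toCoxeterSystem_simple, rho_mul, rho_mul, form_rho_simple M ρ hρ]
  exact h x y

theorem root_norm {lam : B → ℝ} (h : IsRoot M ρ lam) : form M lam lam = 1 := by
  obtain ⟨w, u, rfl⟩ := h
  rw [form_rho M ρ hρ, form_sroot_sroot, pairing_self]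

end RhoLemmas

end St15

namespace St15

open CoxeterSystem List

section Decomp

variable [DecidableEq B] [Fintype B] (M : CoxeterMatrix B)

/-- Decomposition predicate: `w = v * (alternating word in s,t)` with lengths adding
and `v` having no descents at `s, t`. -/
def DProp (s t : B) (w : M.Group) : Prop :=
  ∃ v k, (w = v * M.toCoxeterSystem.wordProd (alternatingWord s t k) ∨
          w = v * M.toCoxeterSystem.wordProd (alternatingWord t s k)) ∧
    M.toCoxeterSystem.length w = M.toCoxeterSystem.length v + k ∧
    ¬M.toCoxeterSystem.IsRightDescent v s ∧ ¬M.toCoxeterSystem.IsRightDescent v t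

theorem DProp_comm {M : CoxeterMatrix B} {s t : B} {w : M.Group}
    (h : DProp M s t w) : DProp M t s w := by
  obtain ⟨v, k, hor, h1, h2, h3⟩ := h
  exact ⟨v, k, hor.symm, h1, h3, h2⟩

theorem decomp_step (s t : B) (w : M.Group)
    (hdt : M.toCoxeterSystem.IsRightDescent w t)
    (H : DProp M s t (w * M.simple t)) : DProp M s t w := by
  obtain ⟨v, k, hor, hlen, hvs, hvt⟩ := H
  have hss : M.simple t * M.simple t = 1 := M.toCoxeterSystem.simple_mul_simple_self t
  have hw : w = (w * M.simple t) * M.simple t := by rw [mul_assoc, hss, mul_one]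
  have hld : M.toCoxeterSystem.length (w * M.simple t) + 1 = M.toCoxeterSystem.length w := by
    have := M.toCoxeterSystem.isRightDescent_iff.mp hdt
    simpa [CoxeterMatrix.toCoxeterSystem_simple] using this
  cases k with
  | zero =>
    have hv : w * M.simple t = v := by
      rcases hor with h | h <;>
        simpa [show alternatingWord s t 0 = [] from rfl,
          show alternatingWord t s 0 = [] from rfl] using h
    refine ⟨v, 1, Or.inl ?_, by omega, hvs, hvt⟩
    rw [show alternatingWord s t 1 = [t] from rfl, wordProd_singleton,
      CoxeterMatrix.toCoxeterSystem_simple, ← hv]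
    exact hw
  | succ k0 =>
    rcases hor with h | h
    · exfalso
      rw [alternatingWord_succ, wordProd_concat, CoxeterMatrix.toCoxeterSystem_simple] at h
      have h2 : w = v * M.toCoxeterSystem.wordProd (alternatingWord t s k0) := by
        rw [hw, h]
        simp [mul_assoc, hss]
      have h3 : M.toCoxeterSystem.length w ≤ M.toCoxeterSystem.length v + k0 := by
        rw [h2]
        refine le_trans (M.toCoxeterSystem.length_mul_le v _) ?_
        have := M.toCoxeterSystem.length_wordProd_le (alternatingWord t s k0)
        rw [length_alternatingWord] at this
        omega
      omega
    · refine ⟨v, k0 + 2, Or.inl ?_, by omega, hvs, hvt⟩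
      rw [show alternatingWord s t (k0+2) = (alternatingWord t s (k0+1)).concat t from rfl,
        wordProd_concat, CoxeterMatrix.toCoxeterSystem_simple, ← mul_assoc, ← h]
      exact hw

theorem decomp (s t : B) :
    ∀ (n : ℕ) (w : M.Group), M.toCoxeterSystem.length w = n → DProp M s t w := by
  intro n
  induction n using Nat.strong_induction_on with
  | _ n ih =>
    intro w hn
    by_cases hdt : M.toCoxeterSystem.IsRightDescent w t
    · have hld : M.toCoxeterSystem.length (w * M.simple t) + 1
          = M.toCoxeterSystem.length w := by
        have := M.toCoxeterSystem.isRightDescent_iff.mp hdt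
        simpa [CoxeterMatrix.toCoxeterSystem_simple] using this
      exact decomp_step M s t w hdt
        (ih (M.toCoxeterSystem.length (w * M.simple t)) (by omega) _ rfl)
    · by_cases hds : M.toCoxeterSystem.IsRightDescent w s
      · have hld : M.toCoxeterSystem.length (w * M.simple s) + 1
            = M.toCoxeterSystem.length w := by
          have := M.toCoxeterSystem.isRightDescent_iff.mp hds
          simpa [CoxeterMatrix.toCoxeterSystem_simple] using this
        exact DProp_comm (decomp_step M t s w hds
          (DProp_comm (ih (M.toCoxeterSystem.length (w * M.simple s)) (by omega) _ rfl)))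
      · exact ⟨w, 0, Or.inl (by
          rw [show alternatingWord s t 0 = [] from rfl, wordProd_nil, mul_one]),
          by simp, hds, hdt⟩

end Decomp

end St15

namespace St15

open CoxeterSystem List Real

section RankTwo

variable [DecidableEq B] [Fintype B] (M : CoxeterMatrix B)
  (ρ : M.Group →* Module.End ℝ (B → ℝ))
  (hρ : ∀ (s : B) (v : B → ℝ),
      ρ (M.simple s) v = v - (2 * form M v (sroot s)) • sroot s)

include hρ

theorem R2aux (s t : B) (c : ℝ) (hcst : pairing M s t = c) (hcts : pairing M t s = c)
    (u : ℕ → ℝ) (hu0 : u 0 = 0) (hu1 : u 1 = 1)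
    (hrec : ∀ j : ℕ, u (j + 2) = -2 * c * u (j + 1) - u j) :
    ∀ k : ℕ, ρ (M.toCoxeterSystem.wordProd (alternatingWord s t k)) (sroot s)
      = (if Even k then u (k + 1) else u k) • sroot s
        + (if Even k then u k else u (k + 1)) • sroot t := by
  intro k
  induction k with
  | zero =>
    rw [show alternatingWord s t 0 = [] from rfl, wordProd_nil, rho_one]
    simp [hu0, hu1]
  | succ k ih =>
    rw [alternatingWord_succ', wordProd_cons, CoxeterMatrix.toCoxeterSystem_simple,
      rho_mul, ih]
    by_cases he : Even k
    · have hne : ¬ Even (k + 1) := by simp [Nat.even_add_one, he]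
      simp only [if_pos he, if_neg hne]
      rw [hρ, form_combo, pairing_self, hcst, hrec k]
      match_scalars <;> ring
    · have hne : Even (k + 1) := by simp [Nat.even_add_one, he]
      simp only [if_neg he, if_pos hne]
      rw [hρ, form_combo, pairing_self, hcts, hrec k]
      match_scalars <;> ring

theorem R2 (s t : B) (hst : s ≠ t) (k : ℕ) (hk : M s t = 0 ∨ k + 1 ≤ M s t) :
    ∃ a b : ℝ, 0 ≤ a ∧ 0 ≤ b ∧
      ρ (M.toCoxeterSystem.wordProd (alternatingWord s t k)) (sroot s)
        = a • sroot s + b • sroot t := by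
  have hts : M t s = M s t := M.symmetric t s
  rcases hk with h0 | hk
  · -- infinite case
    have hcst : pairing M s t = -1 := by unfold pairing; rw [if_pos h0]
    have hcts : pairing M t s = -1 := by rw [pairing_comm]; exact hcst
    have key := R2aux M ρ hρ s t (-1) hcst hcts (fun j => (j : ℝ)) (by norm_num) (by norm_num)
      (fun j => by push_cast; ring) k
    refine ⟨_, _, ?_, ?_, key⟩ <;> split <;> positivity
  · -- finite case
    have hm0 : M s t ≠ 0 := by omega
    set m : ℕ := M s t with hm
    set θ : ℝ := π / (m : ℝ) with hθ
    have hmR : (1: ℝ) < (m : ℝ) := by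
      have : M s t ≠ 1 := M.off_diagonal s t hst
      exact_mod_cast by omega
    have hθpos : 0 < θ := by
      rw [hθ]; positivity
    have hθlt : θ < π := by
      rw [hθ]
      exact div_lt_self pi_pos hmR
    have hsin : 0 < Real.sin θ := Real.sin_pos_of_pos_of_lt_pi hθpos hθlt
    have hcst : pairing M s t = -Real.cos θ := by
      unfold pairing; rw [if_neg hm0]
    have hcts : pairing M t s = -Real.cos θ := by rw [pairing_comm]; exact hcst
    set u : ℕ → ℝ := fun j => Real.sin ((j : ℝ) * θ) / Real.sin θ with hu
    have hrec : ∀ j : ℕ, u (j + 2) = -2 * (-Real.cos θ) * u (j + 1) - u j := by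
      intro j
      have key : Real.sin (((j : ℝ) + 2) * θ)
          = 2 * Real.cos θ * Real.sin (((j : ℝ) + 1) * θ) - Real.sin ((j : ℝ) * θ) := by
        have h2 : ((j : ℝ) + 2) * θ = (((j : ℝ) + 1) * θ) + θ := by ring
        have h0' : (j : ℝ) * θ = (((j : ℝ) + 1) * θ) - θ := by ring
        rw [h2, h0', Real.sin_add, Real.sin_sub]
        ring
      rw [hu]
      push_cast
      rw [key]
      field_simp
    have key := R2aux M ρ hρ s t (-Real.cos θ) hcst hcts u
      (by rw [hu]; norm_num) (by rw [hu]; simp [div_self (ne_of_gt hsin)]) hrec k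
    have hnonneg : ∀ j : ℕ, j ≤ m → 0 ≤ u j := by
      intro j hj
      rw [hu]
      apply div_nonneg _ (le_of_lt hsin)
      apply Real.sin_nonneg_of_nonneg_of_le_pi
      · positivity
      · have h1 : (j : ℝ) * θ ≤ (m : ℝ) * θ := by
          apply mul_le_mul_of_nonneg_right _ (le_of_lt hθpos)
          exact_mod_cast hj
        have h2 : (m : ℝ) * θ = π := by
          rw [hθ]
          field_simp
        linarith
    refine ⟨_, _, ?_, ?_, key⟩ <;> split
    · exact hnonneg (k+1) hk
    · exact hnonneg k (by omega)
    · exact hnonneg k (by omega)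
    · exact hnonneg (k+1) hk

end RankTwo

end St15

namespace St15

open CoxeterSystem List Real

section Dichotomy

variable [DecidableEq B] [Fintype B] (M : CoxeterMatrix B)
  (ρ : M.Group →* Module.End ℝ (B → ℝ))
  (hρ : ∀ (s : B) (v : B → ℝ),
      ρ (M.simple s) v = v - (2 * form M v (sroot s)) • sroot s)

include hρ

/-- The fundamental theorem: if `ws > w` then `ρ(w) α_s` is a positive root. -/
theorem FT : ∀ (n : ℕ) (w : M.Group) (s : B), M.toCoxeterSystem.length w = n →
    ¬M.toCoxeterSystem.IsRightDescent w s → IsPos (ρ w (sroot s)) := by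
  intro n
  induction n using Nat.strong_induction_on with
  | _ n ih =>
    intro w s hn hnd
    by_cases hw : w = 1
    · subst hw; rw [rho_one]; exact sroot_pos s
    -- pick a descent t of w
    obtain ⟨t, hdt⟩ := M.toCoxeterSystem.exists_rightDescent_of_ne_one hw
    have hst : s ≠ t := fun h => hnd (h ▸ hdt)
    obtain ⟨v, k, hor, hlen, hvs, hvt⟩ := decomp M s t (M.toCoxeterSystem.length w) w rfl
    -- k ≥ 1
    have hk1 : 1 ≤ k := by
      rcases Nat.eq_zero_or_pos k with h0 | h; swap; · exact h
      exfalso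
      apply hvt
      subst h0
      have hveq : w = v := by
        rcases hor with h | h <;>
          simpa [show alternatingWord s t 0 = [] from rfl,
            show alternatingWord t s 0 = [] from rfl] using h
      rw [← hveq]
      exact hdt
    -- ¬ descent at s: ℓ(w σs) = ℓ w + 1
    have hlws : M.toCoxeterSystem.length (w * M.simple s)
        = M.toCoxeterSystem.length w + 1 := by
      have h2 := M.toCoxeterSystem.not_isRightDescent_iff.mp hnd
      simpa [CoxeterMatrix.toCoxeterSystem_simple] using h2
    -- rule out the branch ending with s
    have hword : w = v * M.toCoxeterSystem.wordProd (alternatingWord s t k) := by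
      rcases hor with h | h
      · exact h
      · exfalso
        obtain ⟨k0, rfl⟩ : ∃ k0, k = k0 + 1 := ⟨k - 1, by omega⟩
        rw [alternatingWord_succ, wordProd_concat, CoxeterMatrix.toCoxeterSystem_simple] at h
        have hss : M.simple s * M.simple s = 1 := M.toCoxeterSystem.simple_mul_simple_self s
        have h2 : w * M.simple s = v * M.toCoxeterSystem.wordProd (alternatingWord s t k0) := by
          rw [h]; simp [mul_assoc, hss]
        have h3 : M.toCoxeterSystem.length (w * M.simple s)
            ≤ M.toCoxeterSystem.length v + k0 := by
          rw [h2]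
          refine le_trans (M.toCoxeterSystem.length_mul_le v _) ?_
          have := M.toCoxeterSystem.length_wordProd_le (alternatingWord s t k0)
          rw [length_alternatingWord] at this
          omega
        omega
    -- the alternating word extended by s is reduced
    have hred : M.toCoxeterSystem.IsReduced (alternatingWord t s (k + 1)) := by
      have heq : M.toCoxeterSystem.wordProd (alternatingWord t s (k + 1))
          = M.toCoxeterSystem.wordProd (alternatingWord s t k) * M.simple s := by
        rw [alternatingWord_succ, wordProd_concat, CoxeterMatrix.toCoxeterSystem_simple]
      have hx : M.toCoxeterSystem.wordProd (alternatingWord s t k) * M.simple s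
          = v⁻¹ * (w * M.simple s) := by
        rw [hword]; group
      have hle : M.toCoxeterSystem.length
          (M.toCoxeterSystem.wordProd (alternatingWord t s (k + 1))) ≤ k + 1 := by
        have := M.toCoxeterSystem.length_wordProd_le (alternatingWord t s (k + 1))
        rwa [length_alternatingWord] at this
      have hge : k + 1 ≤ M.toCoxeterSystem.length
          (M.toCoxeterSystem.wordProd (alternatingWord t s (k + 1))) := by
        rw [heq, hx]
        have hsub := M.toCoxeterSystem.length_mul_ge_length_sub_length' v⁻¹ (w * M.simple s)
        have hinv : M.toCoxeterSystem.length v⁻¹ = M.toCoxeterSystem.length v :=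
          M.toCoxeterSystem.length_inv v
        omega
      unfold CoxeterSystem.IsReduced
      rw [length_alternatingWord]
      omega
    -- hence k + 1 ≤ m or m = 0
    have hbound : M s t = 0 ∨ k + 1 ≤ M s t := by
      have hts : M t s = M s t := M.symmetric t s
      by_cases h0 : M t s = 0
      · left; omega
      · right
        by_contra hcon
        push_neg at hcon
        exact M.toCoxeterSystem.not_isReduced_alternatingWord t s h0 (by omega) hred
    obtain ⟨a, b, ha, hb, habeq⟩ := R2 M ρ hρ s t hst k hbound
    -- conclude
    have hvs' : IsPos (ρ v (sroot s)) :=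
      ih (M.toCoxeterSystem.length v) (by omega) v s rfl hvs
    have hvt' : IsPos (ρ v (sroot t)) :=
      ih (M.toCoxeterSystem.length v) (by omega) v t rfl hvt
    rw [hword, rho_mul, habeq, map_add, map_smul, map_smul]
    intro x
    have h1 := hvs' x
    have h2 := hvt' x
    simp only [Pi.add_apply, Pi.smul_apply, smul_eq_mul]
    have := mul_nonneg ha h1
    have := mul_nonneg hb h2
    linarith

theorem pos_of_not_descent (w : M.Group) (s : B)
    (h : ¬M.toCoxeterSystem.IsRightDescent w s) : IsPos (ρ w (sroot s)) :=
  FT M ρ hρ (M.toCoxeterSystem.length w) w s rfl h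

theorem neg_of_descent (w : M.Group) (s : B)
    (h : M.toCoxeterSystem.IsRightDescent w s) : IsNeg (ρ w (sroot s)) := by
  have hss : M.simple s * M.simple s = 1 := M.toCoxeterSystem.simple_mul_simple_self s
  have hw : w = (w * M.simple s) * M.simple s := by rw [mul_assoc, hss, mul_one]
  have hnd : ¬M.toCoxeterSystem.IsRightDescent (w * M.simple s) s := by
    intro hcon
    unfold CoxeterSystem.IsRightDescent at h hcon
    rw [CoxeterMatrix.toCoxeterSystem_simple] at h hcon
    rw [← hw] at hcon
    omega
  have hpos := pos_of_not_descent M ρ hρ (w * M.simple s) s hnd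
  have : ρ w (sroot s) = -ρ (w * M.simple s) (sroot s) := by
    conv_lhs => rw [hw]
    rw [rho_mul, rho_simple_sroot M ρ hρ, map_neg]
  rw [this]
  intro x
  simp only [Pi.neg_apply, neg_nonpos]
  exact hpos x

theorem dichotomy {lam : B → ℝ} (h : IsRoot M ρ lam) : IsPos lam ∨ IsNeg lam := by
  obtain ⟨w, u, rfl⟩ := h
  by_cases hd : M.toCoxeterSystem.IsRightDescent w u
  · exact Or.inr (neg_of_descent M ρ hρ w u hd)
  · exact Or.inl (pos_of_not_descent M ρ hρ w u hd)

theorem descent_of_neg (w : M.Group) (s : B)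
    (h : IsNeg (ρ w (sroot s))) : M.toCoxeterSystem.IsRightDescent w s := by
  by_contra hnd
  have hpos := pos_of_not_descent M ρ hρ w s hnd
  have h0 := pos_neg_eq_zero hpos h
  exact root_ne_zero M ρ ⟨w, s, rfl⟩ h0

/-- A positive root sent to a negative vector by a simple reflection is that simple root. -/
theorem simple_of_neg {lam : B → ℝ} (hroot : IsRoot M ρ lam) (hpos : IsPos lam)
    (s : B) (hneg : IsNeg (ρ (M.simple s) lam)) : lam = sroot s := by
  have hcoord : ∀ u, u ≠ s → lam u = 0 := by
    intro u hu
    have h1 : (ρ (M.simple s) lam) u = lam u := rho_simple_apply_ne M ρ hρ hu lam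
    have h2 := hneg u
    have h3 := hpos u
    rw [h1] at h2
    linarith
  have hlam : lam = (lam s) • sroot s := by
    funext u
    rcases eq_or_ne u s with h | h
    · subst h; simp [sroot, Pi.single_eq_same]
    · rw [hcoord u h]
      simp [sroot, Pi.single_eq_of_ne h]
  have hnorm : form M lam lam = 1 := root_norm M ρ hρ hroot
  rw [hlam] at hnorm
  rw [form_smul_left, form_smul_right, form_sroot_sroot, pairing_self] at hnorm
  have hs1 : lam s = 1 := by
    have hge := hpos s
    nlinarith
  rw [hlam, hs1, one_smul]

end Dichotomy

end St15

namespace St15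

open CoxeterSystem List Real

section Depth

variable [DecidableEq B] [Fintype B] (M : CoxeterMatrix B)
  (ρ : M.Group →* Module.End ℝ (B → ℝ))

theorem simple_inv (r : B) : (M.simple r)⁻¹ = M.simple r := by
  have := M.toCoxeterSystem.inv_simple r
  simpa [CoxeterMatrix.toCoxeterSystem_simple] using this

variable (hρ : ∀ (s : B) (v : B → ℝ),
      ρ (M.simple s) v = v - (2 * form M v (sroot s)) • sroot s)

include hρ

theorem chain : ∀ (ω : List B) (mu : B → ℝ), IsRoot M ρ mu → IsPos mu →
    IsNeg (ρ (M.toCoxeterSystem.wordProd ω)⁻¹ mu) →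
    ∃ χ r χ', ω = χ ++ r :: χ' ∧
      ρ (M.toCoxeterSystem.wordProd (χ ++ [r]))⁻¹ mu = -sroot r := by
  intro ω
  induction ω with
  | nil =>
    intro mu hroot hpos hneg
    exfalso
    rw [wordProd_nil, inv_one, rho_one] at hneg
    exact root_ne_zero M ρ hroot (pos_neg_eq_zero hpos hneg)
  | cons r ω' ih =>
    intro mu hroot hpos hneg
    have hstep : ρ (M.toCoxeterSystem.wordProd (r :: ω'))⁻¹ mu
        = ρ (M.toCoxeterSystem.wordProd ω')⁻¹ (ρ (M.simple r) mu) := by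
      rw [wordProd_cons, CoxeterMatrix.toCoxeterSystem_simple, mul_inv_rev, rho_mul,
        simple_inv]
    set mu1 := ρ (M.simple r) mu with hmu1
    have hroot1 : IsRoot M ρ mu1 := isRoot_rho M ρ hroot _
    rcases dichotomy M ρ hρ hroot1 with hp | hn
    · rw [hstep] at hneg
      obtain ⟨χ, r', χ', hsplit, heq⟩ := ih mu1 hroot1 hp hneg
      refine ⟨r :: χ, r', χ', by rw [hsplit]; rfl, ?_⟩
      have hl : (r :: χ) ++ [r'] = r :: (χ ++ [r']) := rfl
      rw [hl, wordProd_cons, CoxeterMatrix.toCoxeterSystem_simple, mul_inv_rev, rho_mul,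
        simple_inv]
      exact heq
    · have hmu : mu = sroot r := simple_of_neg M ρ hρ hroot hpos r hn
      refine ⟨[], r, ω', rfl, ?_⟩
      rw [show ([] : List B) ++ [r] = [r] from rfl, wordProd_singleton,
        CoxeterMatrix.toCoxeterSystem_simple, simple_inv, hmu,
        rho_simple_sroot M ρ hρ]

theorem witness_exists {lam : B → ℝ} (hroot : IsRoot M ρ lam) :
    ∃ w : M.Group, IsNeg (ρ w⁻¹ lam) := by
  obtain ⟨w, u, rfl⟩ := hroot
  refine ⟨w * M.simple u, ?_⟩
  have hinv : (w * M.simple u)⁻¹ = M.simple u * w⁻¹ := by rw [mul_inv_rev, simple_inv]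
  rw [hinv, rho_mul, rho_inv_apply, rho_simple_sroot M ρ hρ]
  intro x
  have := sroot_pos u x
  simp only [Pi.neg_apply]
  linarith

theorem strict (mu : B → ℝ) (hroot : IsRoot M ρ mu) (hpos : IsPos mu) (s : B)
    (hc : form M mu (sroot s) < 0) :
    depth M ρ mu < depth M ρ (ρ (M.simple s) mu) := by
  set f : ℝ := form M mu (sroot s) with hf
  set lam := ρ (M.simple s) mu with hlam
  have hback : ρ (M.simple s) lam = mu := by rw [hlam]; exact rho_simple_invol M ρ hρ s mu
  have hlamroot : IsRoot M ρ lam := isRoot_rho M ρ hroot _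
  have hlameq : lam = mu - (2 * f) • sroot s := hρ s mu
  obtain ⟨w0, hw0⟩ := witness_exists M ρ hρ hlamroot
  have hSne : {n | ∃ w : M.Group, IsNeg (ρ w⁻¹ lam)
      ∧ M.toCoxeterSystem.length w = n}.Nonempty := ⟨_, w0, hw0, rfl⟩
  obtain ⟨v, hvneg, hvlen⟩ := Nat.sInf_mem hSne
  have hvdepth : M.toCoxeterSystem.length v = depth M ρ lam := hvlen
  have hβroot : IsRoot M ρ (ρ v⁻¹ (sroot s)) := ⟨v⁻¹, s, rfl⟩
  -- linear expansion of ρ v⁻¹ lam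
  have hlin : ρ v⁻¹ lam = ρ v⁻¹ mu - (2 * f) • ρ v⁻¹ (sroot s) := by
    rw [hlameq, map_sub, map_smul]
  rcases dichotomy M ρ hρ hβroot with hbp | hbn
  · -- β positive : v is also a witness for mu
    have hvmu : IsNeg (ρ v⁻¹ mu) := by
      intro x
      have h1 := hvneg x
      have h2 := hbp x
      rw [hlin] at h1
      simp only [Pi.sub_apply, Pi.smul_apply, smul_eq_mul] at h1
      nlinarith
    have h1 : depth M ρ mu ≤ M.toCoxeterSystem.length v := Nat.sInf_le ⟨v, hvmu, rfl⟩
    rcases lt_or_eq_of_le h1 with hlt | heqd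
    · omega
    · -- the contradiction case
      exfalso
      obtain ⟨ω, hred, hvω⟩ := M.toCoxeterSystem.exists_reduced_word' v
      have hωlen : ω.length = M.toCoxeterSystem.length v := by
        unfold CoxeterSystem.IsReduced at hred
        rw [← hred, ← hvω]
      have hneg2 : IsNeg (ρ (M.toCoxeterSystem.wordProd ω)⁻¹ mu) := by
        rw [← hvω]; exact hvmu
      obtain ⟨χ, r, χ', hsplit, heq⟩ := chain M ρ hρ ω mu hroot hpos hneg2
      have hyneg : IsNeg (ρ (M.toCoxeterSystem.wordProd (χ ++ [r]))⁻¹ mu) := by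
        rw [heq]
        intro x
        have := sroot_pos r x
        simp only [Pi.neg_apply]
        linarith
      have hy1 : depth M ρ mu ≤ M.toCoxeterSystem.length
          (M.toCoxeterSystem.wordProd (χ ++ [r])) := Nat.sInf_le ⟨_, hyneg, rfl⟩
      have hy2 : M.toCoxeterSystem.length (M.toCoxeterSystem.wordProd (χ ++ [r]))
          ≤ χ.length + 1 := by
        have := M.toCoxeterSystem.length_wordProd_le (χ ++ [r])
        simpa using this
      have hlc := congrArg List.length hsplit
      simp only [List.length_append, List.length_cons] at hlc
      have hχ' : χ' = [] := by
        apply List.length_eq_zero_iff.mp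
        omega
      subst hχ'
      have hωeq : ω = χ ++ [r] := by simpa using hsplit
      have heq2 : ρ v⁻¹ mu = -sroot r := by rw [hvω, hωeq]; exact heq
      set β := ρ v⁻¹ (sroot s) with hβ
      have hβcoord : ∀ x, x ≠ r → β x = 0 := by
        intro x hx
        have h1 := hvneg x
        rw [hlin, heq2] at h1
        simp only [Pi.sub_apply, Pi.smul_apply, Pi.neg_apply, smul_eq_mul] at h1
        have hsx : sroot r x = 0 := by
          unfold sroot; rw [Pi.single_eq_of_ne hx]
        rw [hsx] at h1
        have h2 := hbp x
        nlinarith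
      have hβr : β = β r • sroot r := by
        funext x
        rcases eq_or_ne x r with h | h
        · subst h; simp [sroot, Pi.single_eq_same]
        · rw [hβcoord x h]
          simp [sroot, Pi.single_eq_of_ne h]
      have hnormβ : form M β β = 1 := by
        rw [hβ, form_rho M ρ hρ, form_sroot_sroot, pairing_self]
      rw [hβr, form_smul_left, form_smul_right, form_sroot_sroot, pairing_self] at hnormβ
      have hβrnn : 0 ≤ β r := hbp r
      have hβr1 : β r = 1 := by nlinarith
      have hμr : mu = ρ v (-sroot r) := by rw [← heq2, rho_apply_inv]
      have hαs : ρ v (sroot r) = sroot s := by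
        have hvβ : ρ v β = sroot s := by rw [hβ]; exact rho_apply_inv M ρ v _
        rw [hβr, hβr1, one_smul] at hvβ
        exact hvβ
      rw [map_neg, hαs] at hμr
      have hps := hpos s
      rw [hμr] at hps
      simp only [Pi.neg_apply] at hps
      unfold sroot at hps
      rw [Pi.single_eq_same] at hps
      linarith
  · -- β negative : shorter witness for mu
    have hd : M.toCoxeterSystem.IsRightDescent v⁻¹ s := descent_of_neg M ρ hρ v⁻¹ s hbn
    have hlen2 : M.toCoxeterSystem.length (v⁻¹ * M.simple s) + 1
        = M.toCoxeterSystem.length v⁻¹ := by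
      have := M.toCoxeterSystem.isRightDescent_iff.mp hd
      simpa [CoxeterMatrix.toCoxeterSystem_simple] using this
    set x := (v⁻¹ * M.simple s)⁻¹ with hx
    have hxmu : ρ x⁻¹ mu = ρ v⁻¹ lam := by
      rw [hx, inv_inv, rho_mul, ← hlam]
    have hxneg : IsNeg (ρ x⁻¹ mu) := by rw [hxmu]; exact hvneg
    have h1 : depth M ρ mu ≤ M.toCoxeterSystem.length x := Nat.sInf_le ⟨x, hxneg, rfl⟩
    have h2 : M.toCoxeterSystem.length x = M.toCoxeterSystem.length (v⁻¹ * M.simple s) :=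
      M.toCoxeterSystem.length_inv _
    have h3 : M.toCoxeterSystem.length v⁻¹ = M.toCoxeterSystem.length v :=
      M.toCoxeterSystem.length_inv v
    omega

end Depth

end St15

namespace St15

open CoxeterSystem List Real

section Main

variable [DecidableEq B] [Fintype B] (M : CoxeterMatrix B)
  (ρ : M.Group →* Module.End ℝ (B → ℝ))
  (hρ : ∀ (s : B) (v : B → ℝ),
      ρ (M.simple s) v = v - (2 * form M v (sroot s)) • sroot s)

include hρ

/-- If a positive root with `λ_t = 1` pairs nonpositively with all other simple roots,
it is `α_t`. -/
theorem coord_one {lam : B → ℝ} (hroot : IsRoot M ρ lam) (hpos : IsPos lam) (t : B)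
    (ht : lam t = 1) (hall : ∀ s, s ≠ t → form M lam (sroot s) ≤ 0) : lam = sroot t := by
  have hnorm : form M lam lam = 1 := root_norm M ρ hρ hroot
  have hexp : form M lam lam = ∑ u, lam u * form M (sroot u) lam := form_expand_left M lam lam
  have hsplit : ∑ u, lam u * form M (sroot u) lam
      = ∑ u ∈ Finset.univ \ {t}, lam u * form M (sroot u) lam
        + lam t * form M (sroot t) lam := by
    rw [Finset.sum_eq_sum_sdiff_singleton_add (Finset.mem_univ t)]
  have hrest : ∑ u ∈ Finset.univ \ {t}, lam u * form M (sroot u) lam ≤ 0 := by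
    apply Finset.sum_nonpos
    intro u hu
    have hut : u ≠ t := by
      intro h
      rw [h] at hu
      simp at hu
    have h1 : form M (sroot u) lam ≤ 0 := by
      rw [form_symm]
      exact hall u hut
    exact mul_nonpos_of_nonneg_of_nonpos (hpos u) h1
  have hft : 1 ≤ form M lam (sroot t) := by
    have h2 : form M (sroot t) lam = form M lam (sroot t) := form_symm M _ _
    rw [hexp, hsplit, h2, ht, one_mul] at hnorm
    linarith
  -- μ' = ρ(σ_t) λ has t-coordinate 1 - 2⟨λ,α_t⟩ < 0, so it is a negative root
  have hμt : (ρ (M.simple t) lam) t = 1 - 2 * form M lam (sroot t) := by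
    rw [hρ]
    simp only [Pi.sub_apply, Pi.smul_apply, smul_eq_mul]
    unfold sroot
    rw [Pi.single_eq_same, ht]
    ring
  have hμroot : IsRoot M ρ (ρ (M.simple t) lam) := isRoot_rho M ρ hroot _
  have hμneg : IsNeg (ρ (M.simple t) lam) := by
    rcases dichotomy M ρ hρ hμroot with hp | hn
    · exfalso
      have := hp t
      rw [hμt] at this
      linarith
    · exact hn
  funext u
  rcases eq_or_ne u t with h | h
  · subst h
    rw [ht]
    unfold sroot
    rw [Pi.single_eq_same]
  · have h1 : (ρ (M.simple t) lam) u = lam u := rho_simple_apply_ne M ρ hρ h lam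
    have h2 := hμneg u
    have h3 := hpos u
    rw [h1] at h2
    unfold sroot
    rw [Pi.single_eq_of_ne h]
    linarith

theorem main_aux (t : B) : ∀ (n : ℕ) (lam : B → ℝ), IsRoot M ρ lam → IsPos lam →
    lam t = 1 → depth M ρ lam = n →
    ∃ w ∈ Subgroup.closure (M.simple '' {s : B | s ≠ t}), ρ w (sroot t) = lam := by
  intro n
  induction n using Nat.strong_induction_on with
  | _ n ih =>
    intro lam hroot hpos ht hdep
    by_cases hlam : lam = sroot t
    · exact ⟨1, one_mem _, by rw [rho_one, hlam]⟩
    · have hex : ∃ s, s ≠ t ∧ 0 < form M lam (sroot s) := by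
        by_contra hcon
        push_neg at hcon
        exact hlam (coord_one M ρ hρ hroot hpos t ht fun s hs => hcon s hs)
      obtain ⟨s, hst, hf⟩ := hex
      set mu := ρ (M.simple s) lam with hmu
      have hmuroot : IsRoot M ρ mu := isRoot_rho M ρ hroot _
      have hmut : mu t = 1 := by
        rw [hmu, rho_simple_apply_ne M ρ hρ (Ne.symm hst) lam, ht]
      have hmupos : IsPos mu := by
        rcases dichotomy M ρ hρ hmuroot with hp | hn
        · exact hp
        · exfalso
          have := hn t
          rw [hmut] at this
          linarith
      have hback : ρ (M.simple s) mu = lam := by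
        rw [hmu]
        exact rho_simple_invol M ρ hρ s lam
      have hcmu : form M mu (sroot s) < 0 := by
        have hμeq : mu = lam - (2 * form M lam (sroot s)) • sroot s := hρ s lam
        rw [hμeq, form_sub_left, form_smul_left, form_sroot_sroot, pairing_self]
        linarith
      have hlt : depth M ρ mu < depth M ρ lam := by
        have := strict M ρ hρ mu hmuroot hmupos s hcmu
        rwa [hback] at this
      obtain ⟨w₁, hw₁, hρw₁⟩ := ih (depth M ρ mu) (by omega) mu hmuroot hmupos hmut rfl
      refine ⟨M.simple s * w₁, ?_, ?_⟩
      · exact mul_mem (Subgroup.subset_closure ⟨s, hst, rfl⟩) hw₁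
      · rw [rho_mul, hρw₁, hback]

end Main

end St15


theorem statement15 [DecidableEq B] [Fintype B] (M : CoxeterMatrix B)
    (ρ : M.Group →* Module.End ℝ (B → ℝ))
    (hρ : ∀ (s : B) (v : B → ℝ),
      ρ (M.simple s) v = v - (2 * form M v (sroot s)) • sroot s)
    (lam : B → ℝ) (hlam : IsPosRoot M ρ lam) (t : B) (ht : lam t = 1) :
    ∃ w ∈ Subgroup.closure (M.simple '' {s : B | s ≠ t}),
      ρ w (sroot t) = lam := by
  obtain ⟨hroot, hpos⟩ := hlam
  exact St15.main_aux M ρ hρ t (depth M ρ lam) lam hroot hpos ht rfl
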